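/- There is a constant C = C(N,Ω) depending only on N and Ω such that for every ε ∈ (0,1], every p ∈ [2,∞), every Borel control σ : closure(Ω) → S^{N−1} and every starting point x₀ ∈ Ω_ε, the exit time satisfies ε²·E^{x₀}_σ[τ_σ] ≤ C; in particular P^{x₀}_σ(τ_σ < ∞) = 1, i.e. the process exits into Γ_ε almost surely. -/

import Mathlib

open MeasureTheory Metric Set
open scoped ENNReal NNReal Classical

noncomputable section

abbrev EucN (N : ℕ) := EuclideanSpace ℝ (Fin N)

variable {N : ℕ}

/-- `Ω_ε = {x : dist(x,Ω) ≤ ε}`. -/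
def Oeps (Ω : Set (EucN N)) (ε : ℝ) : Set (EucN N) := {x | Metric.infDist x Ω ≤ ε}

/-- `Γ_ε = Ω_ε \ closure Ω`. -/
def Geps (Ω : Set (EucN N)) (ε : ℝ) : Set (EucN N) := Oeps Ω ε \ closure Ω

/-- a Borel control with values in the unit sphere -/
def IsControl (σ : EucN N → EucN N) : Prop := Measurable σ ∧ ∀ x, ‖σ x‖ = 1

/-- the transition probability measures `γ_σ[x]` -/
def gamKer (q ε : ℝ) (Ω : Set (EucN N)) (σ : EucN N → EucN N) (x : EucN N) :
    Measure (EucN N) :=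
  if x ∈ closure Ω then
    ENNReal.ofReal q • ((volume (ball x ε))⁻¹ • volume.restrict (ball x ε)) +
      ENNReal.ofReal ((1 - q) / 2) •
        (Measure.dirac (x + ε • σ x) + Measure.dirac (x - ε • σ x))
  else Measure.dirac x

/-- probability of the cylinder `{ω : ω i ∈ A i, i ≤ n}` for the chain started at `x`
with transitions `γ`. -/
def cylProb (γ : EucN N → Measure (EucN N)) : ℕ → EucN N → (ℕ → Set (EucN N)) → ℝ≥0∞
  | 0, x, A => (A 0).indicator 1 x
  | n + 1, x, A => (A 0).indicator 1 x * ∫⁻ y, cylProb γ n y (fun i => A (i + 1)) ∂(γ x)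

/-- `P` is the trajectory (Ionescu-Tulcea/Kolmogorov) measure of the chain started at
`x₀` with transition kernel `γ`. -/
def IsTrajMeasure (γ : EucN N → Measure (EucN N)) (x₀ : EucN N)
    (P : Measure (ℕ → EucN N)) : Prop :=
  IsProbabilityMeasure P ∧
    ∀ (n : ℕ) (A : ℕ → Set (EucN N)), (∀ i, MeasurableSet (A i)) →
      P {ω | ∀ i ≤ n, ω i ∈ A i} = cylProb γ n x₀ A

/-- the exit time `τ = min{n : ω n ∈ Γ}` as an extended nonnegative real (`∞` if the
trajectory never reaches `Γ`). -/
def exitTimeE (Γ : Set (EucN N)) (ω : ℕ → EucN N) : ℝ≥0∞ :=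
  ⨅ (n : ℕ) (_ : ω n ∈ Γ), (n : ℝ≥0∞)

/-! ### Auxiliary lemmas -/

section Aux

open scoped RealInnerProductSpace

lemma gamKer_lintegral {q ε : ℝ} {Ω : Set (EucN N)} {σ : EucN N → EucN N}
    {x : EucN N} (hx : x ∈ closure Ω) (f : EucN N → ℝ≥0∞) :
    ∫⁻ y, f y ∂(gamKer q ε Ω σ x)
      = ENNReal.ofReal q * ((volume (ball x ε))⁻¹ * ∫⁻ y in ball x ε, f y)
        + ENNReal.ofReal ((1 - q)/2) * (f (x + ε • σ x) + f (x - ε • σ x)) := by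
  simp [gamKer, hx, lintegral_add_measure, lintegral_smul_measure, lintegral_dirac, mul_add]

lemma ball_subset_Oeps {ε : ℝ} {Ω : Set (EucN N)} {x y : EucN N}
    (hx : x ∈ closure Ω) (hy : dist y x ≤ ε) : y ∈ Oeps Ω ε := by
  have h0 : infDist x Ω = 0 := infDist_zero_of_mem_closure hx
  have := infDist_le_infDist_add_dist (x := y) (y := x) (s := Ω)
  simp only [Oeps, mem_setOf_eq]
  nlinarith [this]

lemma gamKer_compl_Oeps {q ε : ℝ} (hε : 0 < ε) {Ω : Set (EucN N)}
    {σ : EucN N → EucN N} (hσ : ∀ x, ‖σ x‖ = 1)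
    {x : EucN N} (hx : x ∈ closure Ω) :
    gamKer q ε Ω σ x (Oeps Ω ε)ᶜ = 0 := by
  have hOc : IsClosed (Oeps Ω ε) :=
    isClosed_le (continuous_infDist_pt Ω) continuous_const
  have hmeas : MeasurableSet (Oeps Ω ε)ᶜ := hOc.measurableSet.compl
  have hball : ball x ε ∩ (Oeps Ω ε)ᶜ = ∅ := by
    ext y; simp only [mem_inter_iff, mem_compl_iff, mem_ball, mem_empty_iff_false, iff_false,
      not_and, not_not]
    intro hy; exact ball_subset_Oeps hx hy.le
  have h1 : x + ε • σ x ∈ Oeps Ω ε := by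
    apply ball_subset_Oeps hx
    simp [dist_eq_norm, norm_smul, hσ x, abs_of_pos hε]
  have h2 : x - ε • σ x ∈ Oeps Ω ε := by
    apply ball_subset_Oeps hx
    simp [dist_eq_norm, norm_smul, hσ x, abs_of_pos hε]
  simp only [gamKer, if_pos hx, Measure.coe_add, Measure.coe_smul, Pi.add_apply, Pi.smul_apply,
    Measure.restrict_apply hmeas, Measure.dirac_apply' _ hmeas, smul_eq_mul]
  rw [Set.inter_comm] at hball
  simp [hball, indicator_of_mem, h1, h2, Set.indicator_apply]

lemma ball_lintegral_shift (ε : ℝ) (f : EucN N → ℝ≥0∞) (x : EucN N) :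
    ∫⁻ y in ball x ε, f y = ∫⁻ z, (ball (0:EucN N) ε).indicator (fun z => f (x + z)) z := by
  rw [← lintegral_indicator measurableSet_ball]
  rw [← lintegral_add_left_eq_self (fun y => (ball x ε).indicator f y) x]
  congr 1; ext z
  by_cases hz : z ∈ ball (0:EucN N) ε
  · have : x + z ∈ ball x ε := by
      simpa [dist_eq_norm] using (by simpa [dist_eq_norm] using hz : ‖z‖ < ε)
    simp [indicator_of_mem, this, hz]
  · have : x + z ∉ ball x ε := by
      simp only [mem_ball, dist_eq_norm] at hz ⊢
      simpa using hz
    simp [indicator_of_notMem, this, hz]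

lemma measurable_ball_lintegral (ε : ℝ) {f : EucN N → ℝ≥0∞} (hf : Measurable f) :
    Measurable (fun x => ∫⁻ y in ball x ε, f y) := by
  simp_rw [ball_lintegral_shift ε f]
  apply Measurable.lintegral_prod_right' (f := fun p : EucN N × EucN N =>
    (ball (0:EucN N) ε).indicator (fun z => f (p.1 + z)) p.2)
  exact Measurable.indicator (hf.comp (measurable_fst.add measurable_snd))
    (measurableSet_ball.preimage measurable_snd)

lemma measurable_gamKer_lintegral (q ε : ℝ) (Ω : Set (EucN N)) {σ : EucN N → EucN N}
    (hσ : Measurable σ) {f : EucN N → ℝ≥0∞} (hf : Measurable f) :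
    Measurable (fun x => ∫⁻ y, f y ∂(gamKer q ε Ω σ x)) := by
  have hker : (fun x => ∫⁻ y, f y ∂(gamKer q ε Ω σ x)) =
      fun x => if x ∈ closure Ω then
        ENNReal.ofReal q * ((volume (ball x ε))⁻¹ * ∫⁻ y in ball x ε, f y)
          + ENNReal.ofReal ((1 - q)/2) * (f (x + ε • σ x) + f (x - ε • σ x))
      else f x := by
    ext x
    by_cases hx : x ∈ closure Ω
    · exact gamKer_lintegral hx f |>.trans (by simp [hx])
    · simp [gamKer, hx, lintegral_dirac]
  rw [hker]
  have hV : Measurable fun x : EucN N => (volume (ball x ε))⁻¹ := by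
    have h : (fun x : EucN N => (volume (ball x ε))⁻¹)
        = fun _ => (volume (ball (0:EucN N) ε))⁻¹ := by
      ext x; rw [Measure.addHaar_ball_center]
    rw [h]; exact measurable_const
  refine Measurable.ite (isClosed_closure.measurableSet) ?_ hf
  refine Measurable.add ?_ ?_
  · exact measurable_const.mul (hV.mul (measurable_ball_lintegral ε hf))
  · exact measurable_const.mul
      ((hf.comp (measurable_id.add (hσ.const_smul ε))).add
        (hf.comp (measurable_id.sub (hσ.const_smul ε))))

lemma integrableOn_ball_of_continuous {f : EucN N → ℝ} (hf : Continuous f) (x : EucN N) (r : ℝ) :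
    IntegrableOn f (ball x r) volume :=
  ((hf.locallyIntegrable).integrableOn_isCompact (isCompact_closedBall x r)).mono_set
    ball_subset_closedBall

lemma ball_integral_shift (ε : ℝ) (f : EucN N → ℝ) (x : EucN N) :
    ∫ y in ball x ε, f y = ∫ z in ball (0:EucN N) ε, f (x + z) := by
  rw [← integral_indicator measurableSet_ball, ← integral_indicator measurableSet_ball,
    ← integral_add_left_eq_self (fun y => (ball x ε).indicator f y) x]
  congr 1; ext z
  by_cases hz : z ∈ ball (0:EucN N) ε
  · have hz' : x + z ∈ ball x ε := by
      simpa [mem_ball, dist_eq_norm] using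
        (show ‖z‖ < ε by simpa [mem_ball, dist_eq_norm] using hz)
    simp [indicator_of_mem, hz, hz']
  · have hz' : x + z ∉ ball x ε := by
      simp only [mem_ball, dist_eq_norm] at hz ⊢; simpa using hz
    simp [indicator_of_notMem, hz, hz']

lemma integral_inner_ball_zero (ε : ℝ) (x : EucN N) :
    ∫ z in ball (0:EucN N) ε, ⟪x, z⟫ = 0 := by
  have key : ∫ z in ball (0:EucN N) ε, ⟪x, z⟫ = - ∫ z in ball (0:EucN N) ε, ⟪x, z⟫ := by
    nth_rewrite 1 [← integral_indicator measurableSet_ball]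
    rw [← integral_neg_eq_self
      (fun z => (ball (0:EucN N) ε).indicator (fun z => ⟪x, z⟫) z) volume]
    rw [← integral_indicator measurableSet_ball, ← integral_neg]
    congr 1; ext z
    by_cases hz : z ∈ ball (0:EucN N) ε
    · have hz' : -z ∈ ball (0:EucN N) ε := by simpa [mem_ball, dist_eq_norm] using hz
      simp [indicator_of_mem, hz, hz', inner_neg_right]
    · have hz' : -z ∉ ball (0:EucN N) ε := by
        simp only [mem_ball, dist_eq_norm] at hz ⊢; simpa using hz
      simp [indicator_of_notMem, hz, hz']
  linarith [key]

lemma volume_ball_half (hN : 1 ≤ N) (ε : ℝ) (hε : 0 < ε) :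
    (volume (ball (0:EucN N) (ε/2))).toReal ≤ (volume (ball (0:EucN N) ε)).toReal / 2 := by
  have h1 := Measure.addHaar_ball_of_pos (volume : Measure (EucN N)) (0:EucN N) hε
  have h2 := Measure.addHaar_ball_of_pos (volume : Measure (EucN N)) (0:EucN N) (half_pos hε)
  rw [finrank_euclideanSpace_fin] at h1 h2
  rw [h1, h2, ENNReal.toReal_mul, ENNReal.toReal_mul, ENNReal.toReal_ofReal (by positivity),
    ENNReal.toReal_ofReal (by positivity)]
  rw [div_pow]
  have hb : (0:ℝ) ≤ (volume (ball (0:EucN N) (1:ℝ))).toReal := ENNReal.toReal_nonneg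
  have h2N : (2:ℝ) ≤ 2 ^ N := by
    calc (2:ℝ) = 2 ^ 1 := (pow_one 2).symm
    _ ≤ 2 ^ N := pow_le_pow_right₀ (by norm_num) hN
  rw [div_mul_eq_mul_div, div_le_div_iff₀ (by positivity) (by norm_num)]
  nlinarith [pow_pos hε N, mul_nonneg (pow_nonneg hε.le N) hb]

set_option maxHeartbeats 1000000 in
lemma moment_bound (hN : 1 ≤ N) {ε : ℝ} (hε : 0 < ε) (x : EucN N) :
    (volume (ball x ε)).toReal * (‖x‖^2 + ε^2/8) ≤ ∫ y in ball x ε, ‖y‖^2 := by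
  have hcont : Continuous fun y : EucN N => ‖y‖^2 := (continuous_norm.pow 2)
  rw [ball_integral_shift ε _ x]
  have hexp : ∀ z : EucN N, ‖x + z‖^2 = ‖x‖^2 + 2 * ⟪x, z⟫ + ‖z‖^2 := fun z =>
    norm_add_sq_real x z
  rw [integral_congr_ae (Filter.Eventually.of_forall fun z => hexp z)]
  set B := ball (0:EucN N) ε
  have hint1 : IntegrableOn (fun _ : EucN N => ‖x‖^2) B volume :=
    integrableOn_ball_of_continuous continuous_const _ _
  have hint2 : IntegrableOn (fun z : EucN N => 2 * ⟪x, z⟫) B volume :=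
    integrableOn_ball_of_continuous
      (continuous_const.mul (continuous_const.inner continuous_id)) _ _
  have hint3 : IntegrableOn (fun z : EucN N => ‖z‖^2) B volume :=
    integrableOn_ball_of_continuous hcont _ _
  have hsplit : ∫ z in B, (‖x‖^2 + 2 * ⟪x, z⟫ + ‖z‖^2)
      = (∫ z in B, ‖x‖^2) + (∫ z in B, 2 * ⟪x, z⟫) + ∫ z in B, ‖z‖^2 := by
    have e12 : IntegrableOn (fun z : EucN N => ‖x‖^2 + 2 * ⟪x, z⟫) B volume := hint1.add hint2
    rw [integral_add e12 hint3, integral_add hint1 hint2]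
  rw [hsplit]
  have hzero : (∫ z in B, 2 * ⟪x, z⟫) = 0 := by
    rw [integral_const_mul, integral_inner_ball_zero]; ring
  have hconst : (∫ z in B, ‖x‖^2) = (volume B).toReal * ‖x‖^2 := by
    rw [setIntegral_const, smul_eq_mul, measureReal_def]
  have hVeq : volume (ball x ε) = volume B := Measure.addHaar_ball_center volume x ε
  rw [hzero, hconst, hVeq]
  have hmom : (volume B).toReal * (ε^2/8) ≤ ∫ z in B, ‖z‖^2 := by
    set A := B \ ball (0:EucN N) (ε/2) with hA
    have hsub : ball (0:EucN N) (ε/2) ⊆ B := ball_subset_ball (by linarith)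
    have hAB : A ⊆ B := diff_subset
    have h1 : ∫ z in A, ‖z‖^2 ≤ ∫ z in B, ‖z‖^2 := by
      apply setIntegral_mono_set hint3
      · exact Filter.Eventually.of_forall fun z => by positivity
      · exact HasSubset.Subset.eventuallyLE hAB
    have hAmeas : MeasurableSet A := measurableSet_ball.diff measurableSet_ball
    have h2 : (ε/2)^2 * (volume A).toReal ≤ ∫ z in A, ‖z‖^2 := by
      have h2'' : ∫ z in A, (ε/2)^2 ≤ ∫ z in A, ‖z‖^2 := by
        apply setIntegral_mono_on (integrableOn_const ((measure_mono hAB).trans_lt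
          measure_ball_lt_top).ne) (hint3.mono_set hAB) hAmeas
        intro z hz
        have h2' : ε/2 ≤ ‖z‖ := by
          have := hz.2
          simp only [mem_ball, dist_eq_norm, not_lt, sub_zero] at this
          simpa using this
        nlinarith [norm_nonneg z]
      rw [setIntegral_const, smul_eq_mul, measureReal_def] at h2''
      linarith
    have hvolA : (volume B).toReal / 2 ≤ (volume A).toReal := by
      rw [hA, measure_diff hsub measurableSet_ball.nullMeasurableSet measure_ball_lt_top.ne,
        ENNReal.toReal_sub_of_le (measure_mono hsub) measure_ball_lt_top.ne]
      have := volume_ball_half hN ε hε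
      linarith
    calc (volume B).toReal * (ε^2/8) = (ε/2)^2 * ((volume B).toReal/2) := by ring
    _ ≤ (ε/2)^2 * (volume A).toReal := by nlinarith [sq_nonneg (ε/2)]
    _ ≤ ∫ z in A, ‖z‖^2 := h2
    _ ≤ ∫ z in B, ‖z‖^2 := h1
  nlinarith [hmom]


lemma exitTimeE_measurable {Γ : Set (EucN N)} (hΓ : MeasurableSet Γ) :
    Measurable (exitTimeE Γ : (ℕ → EucN N) → ℝ≥0∞) := by
  apply Measurable.iInf
  intro n
  have hset : MeasurableSet {ω : ℕ → EucN N | ω n ∈ Γ} := (measurable_pi_apply n) hΓ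
  have h : (fun ω : ℕ → EucN N => ⨅ (_ : ω n ∈ Γ), (n : ℝ≥0∞))
      = {ω : ℕ → EucN N | ω n ∈ Γ}.piecewise (fun _ => (n:ℝ≥0∞)) (fun _ => ⊤) := by
    ext ω; by_cases h : ω n ∈ Γ
    · simp [Set.piecewise, h]
    · simp [Set.piecewise, h]
  rw [h]
  exact Measurable.piecewise hset measurable_const measurable_const

lemma exitTimeE_ge_iff {Γ : Set (EucN N)} (n : ℕ) (ω : ℕ → EucN N) :
    ((n:ℝ≥0∞) + 1 ≤ exitTimeE Γ ω) ↔ ∀ i ≤ n, ω i ∈ Γᶜ := by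
  simp only [exitTimeE, le_iInf_iff]
  constructor
  · intro h i hi hmem
    have h2 := h i hmem
    have : ((n:ℝ≥0∞) + 1 ≤ (i:ℝ≥0∞)) := h2
    rw [show ((n:ℝ≥0∞) + 1) = ((n+1 : ℕ) : ℝ≥0∞) by push_cast; ring, Nat.cast_le] at this
    omega
  · intro h m hm
    have hmn : n < m := by
      by_contra hc
      exact h m (by omega) hm
    rw [show ((n:ℝ≥0∞) + 1) = ((n+1 : ℕ) : ℝ≥0∞) by push_cast; ring, Nat.cast_le]
    omega

lemma exitTimeE_tsum {Γ : Set (EucN N)} (ω : ℕ → EucN N) :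
    exitTimeE Γ ω = ∑' n : ℕ, if ((n:ℝ≥0∞) + 1 ≤ exitTimeE Γ ω) then (1:ℝ≥0∞) else 0 := by
  by_cases h : ∃ m, ω m ∈ Γ
  · have hval : exitTimeE Γ ω = (Nat.find h : ℝ≥0∞) := by
      apply le_antisymm
      · exact iInf_le_of_le (Nat.find h) (iInf_le_of_le (Nat.find_spec h) le_rfl)
      · refine le_iInf fun m => le_iInf fun hm => ?_
        exact_mod_cast Nat.find_min' h hm
    rw [hval]
    set k := Nat.find h
    have hcond : ∀ n : ℕ, (((n:ℝ≥0∞) + 1 ≤ (k:ℝ≥0∞)) ↔ n < k) := by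
      intro n
      rw [show ((n:ℝ≥0∞) + 1) = ((n+1 : ℕ) : ℝ≥0∞) by push_cast; ring, Nat.cast_le]
      omega
    simp only [hcond]
    rw [tsum_eq_sum (s := Finset.range k) (fun n hn => by
      simp only [Finset.mem_range] at hn; simp [hn])]
    rw [Finset.sum_ite_of_true (fun n hn => Finset.mem_range.1 hn)]
    simp
  · have hval : exitTimeE Γ ω = ⊤ := by
      rw [exitTimeE]
      simp only [iInf_eq_top]
      intro n hn
      exact absurd ⟨n, hn⟩ h
    rw [hval]
    simp only [le_top, if_true]
    exact (ENNReal.tsum_const_eq_top_of_ne_zero one_ne_zero).symm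

end Aux

set_option maxHeartbeats 2000000 in
/-- there is a constant `C = C(N,Ω)` with `ε² E^{x₀}_σ[τ_σ] ≤ C` for all
`ε ∈ (0,1]`, all `p ∈ [2,∞)`, all Borel controls `σ` and all starting points
`x₀ ∈ Ω_ε`; in particular the process exits into `Γ_ε` almost surely. -/
theorem exit_time_bound (hN : 2 ≤ N)
    (Ω : Set (EucN N)) (hΩo : IsOpen Ω) (hΩb : Bornology.IsBounded Ω) :
    ∃ C : ℝ, ∀ ε : ℝ, 0 < ε → ε ≤ 1 → ∀ p : ℝ, 2 ≤ p →
      ∀ σ : EucN N → EucN N, IsControl σ → ∀ x₀ ∈ Oeps Ω ε,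
        ∀ P : Measure (ℕ → EucN N),
          IsTrajMeasure (gamKer (((N : ℝ) + 2) / ((N : ℝ) + p)) ε Ω σ) x₀ P →
          ENNReal.ofReal (ε ^ 2) * (∫⁻ ω, exitTimeE (Geps Ω ε) ω ∂P)
              ≤ ENNReal.ofReal C ∧
            P {ω | exitTimeE (Geps Ω ε) ω < ⊤} = 1 := by
  obtain ⟨R, hR0, hRsub⟩ : ∃ R : ℝ, 0 ≤ R ∧ closure Ω ⊆ closedBall 0 R := by
    obtain ⟨r, hr⟩ := (hΩb.closure).subset_closedBall 0
    exact ⟨max r 0, le_max_right _ _,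
      hr.trans (closedBall_subset_closedBall (le_max_left _ _))⟩
  set M : ℝ := (R+2)^2 with hM
  refine ⟨8*M, ?_⟩
  intro ε hε hε1 p hp σ hσ x₀ hx₀ P hP
  set q : ℝ := ((N:ℝ)+2)/((N:ℝ)+p) with hq
  set Γ : Set (EucN N) := Geps Ω ε with hΓdef
  set γ : EucN N → Measure (EucN N) := gamKer q ε Ω σ with hγ
  have hOclosed : IsClosed (Oeps Ω ε) := isClosed_le (continuous_infDist_pt Ω) continuous_const
  have hΓmeas : MeasurableSet Γ :=
    hOclosed.measurableSet.diff isClosed_closure.measurableSet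
  haveI hPP : IsProbabilityMeasure P := hP.1
  have hτmeas := exitTimeE_measurable (Γ := Γ) hΓmeas
  rcases eq_empty_or_nonempty Ω with hΩe | hΩne
  · -- degenerate case Ω = ∅
    have hΓuniv : Γ = univ := by
      have hO : Oeps Ω ε = univ := by
        ext x; simp [Oeps, hΩe, Metric.infDist_empty, hε.le]
      rw [hΓdef, Geps, hO, hΩe, closure_empty, diff_empty]
    have hτ0 : ∀ ω : ℕ → EucN N, exitTimeE Γ ω = 0 := by
      intro ω
      refine le_antisymm ?_ zero_le
      refine iInf_le_of_le 0 (iInf_le_of_le (by rw [hΓuniv]; trivial) (by simp))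
    constructor
    · have : ∫⁻ ω, exitTimeE Γ ω ∂P = 0 := by
        rw [lintegral_eq_zero_iff hτmeas]
        exact Filter.Eventually.of_forall fun ω => by simpa using hτ0 ω
      rw [this, mul_zero]; exact zero_le
    · have huniv : {ω : ℕ → EucN N | exitTimeE Γ ω < ⊤} = univ := by
        ext ω; simp [hτ0]
      rw [huniv]; exact measure_univ
  -- main case
  have hq0 : 0 < q := by
    have hN0 : (0:ℝ) ≤ (N:ℝ) := Nat.cast_nonneg N
    exact div_pos (by linarith) (by linarith)
  have hq1 : q ≤ 1 := by
    rw [hq, div_le_one (by positivity)]; linarith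
  have hnormOeps : ∀ y ∈ Oeps Ω ε, ‖y‖ ≤ R + 2 := by
    intro y hy
    have h1 : infDist y Ω < 2 := lt_of_le_of_lt hy (by linarith)
    obtain ⟨w, hwΩ, hw⟩ := (infDist_lt_iff hΩne).1 h1
    have hwR : ‖w‖ ≤ R := by
      have := hRsub (subset_closure hwΩ)
      rwa [mem_closedBall, dist_zero_right] at this
    have hyw : w + (y - w) = y := by abel
    calc ‖y‖ = ‖w + (y - w)‖ := by rw [hyw]
    _ ≤ ‖w‖ + ‖y - w‖ := norm_add_le _ _
    _ ≤ R + 2 := by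
      have : ‖y - w‖ < 2 := by rwa [← dist_eq_norm]
      linarith
  have hMclos : ∀ x ∈ closure Ω, ‖x‖^2 + 4 ≤ M := by
    intro x hx
    have hxR : ‖x‖ ≤ R := by
      have := hRsub hx; rwa [mem_closedBall, dist_zero_right] at this
    have := norm_nonneg x
    nlinarith
  set K : ℝ := 8/ε^2 with hK
  have hKpos : 0 < K := by positivity
  have hKε : ε^2 * K = 8 := by rw [hK]; field_simp
  set φ : EucN N → ℝ≥0∞ := fun y => ENNReal.ofReal ((M - ‖y‖^2) * K) with hφ
  -- the drift estimate
  have hdrift : ∀ x ∈ closure Ω, 1 + ∫⁻ y, φ y ∂(γ x) ≤ φ x := by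
    intro x hx
    have hxR : ‖x‖^2 + 4 ≤ M := hMclos x hx
    rw [hγ, gamKer_lintegral hx]
    set V := volume (ball x ε) with hV
    have hV0 : V ≠ 0 := (measure_ball_pos volume x hε).ne'
    have hVt : V ≠ ⊤ := measure_ball_lt_top.ne
    have hballOeps : ∀ y ∈ ball x ε, ‖y‖ ≤ R + 2 := fun y hy =>
      hnormOeps y (ball_subset_Oeps hx (le_of_lt (by rwa [mem_ball] at hy)))
    have hOM : ∀ y : EucN N, ‖y‖ ≤ R + 2 → 0 ≤ (M - ‖y‖^2) * K := by
      intro y hy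
      have hyn := norm_nonneg y
      have h1 : 0 ≤ (R + 2 - ‖y‖) * (R + 2 + ‖y‖) :=
        mul_nonneg (by linarith) (by linarith)
      have h2 : 0 ≤ M - ‖y‖^2 := by nlinarith
      exact mul_nonneg h2 hKpos.le
    -- ball part
    have hballpart : V⁻¹ * ∫⁻ y in ball x ε, φ y
        ≤ ENNReal.ofReal ((M - ‖x‖^2 - ε^2/8) * K) := by
      have hcont : Continuous fun y : EucN N => (M - ‖y‖^2) * K :=
        ((continuous_const.sub (continuous_norm.pow 2)).mul continuous_const)
      have hint : IntegrableOn (fun y : EucN N => (M - ‖y‖^2) * K) (ball x ε) volume :=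
        integrableOn_ball_of_continuous hcont x ε
      have hnn : 0 ≤ᵐ[volume.restrict (ball x ε)] fun y : EucN N => (M - ‖y‖^2) * K := by
        refine (ae_restrict_iff' measurableSet_ball).2
          (Filter.Eventually.of_forall fun y hy => hOM y (hballOeps y hy))
      have heq : ∫⁻ y in ball x ε, φ y
          = ENNReal.ofReal (∫ y in ball x ε, (M - ‖y‖^2) * K) :=
        (ofReal_integral_eq_lintegral_ofReal hint hnn).symm
      have hintsq : IntegrableOn (fun y : EucN N => ‖y‖^2) (ball x ε) volume :=
        integrableOn_ball_of_continuous (continuous_norm.pow 2) x ε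
      have hintub : ∫ y in ball x ε, (M - ‖y‖^2) * K
          ≤ V.toReal * ((M - ‖x‖^2 - ε^2/8) * K) := by
        have hmom := moment_bound (by omega : 1 ≤ N) hε x
        have hsplit : ∫ y in ball x ε, (M - ‖y‖^2) * K
            = (M * V.toReal - ∫ y in ball x ε, ‖y‖^2) * K := by
          rw [integral_mul_const]
          congr 1
          have hconst : IntegrableOn (fun _ : EucN N => M) (ball x ε) volume :=
            integrableOn_ball_of_continuous continuous_const x ε
          rw [integral_sub hconst hintsq, setIntegral_const, smul_eq_mul, measureReal_def, mul_comm]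
        rw [hsplit]
        nlinarith [hKpos.le]
      calc V⁻¹ * ∫⁻ y in ball x ε, φ y
          ≤ V⁻¹ * (V * ENNReal.ofReal ((M - ‖x‖^2 - ε^2/8) * K)) := by
            apply mul_le_mul_right
            rw [heq]
            calc ENNReal.ofReal (∫ y in ball x ε, (M - ‖y‖^2) * K)
                ≤ ENNReal.ofReal (V.toReal * ((M - ‖x‖^2 - ε^2/8) * K)) :=
                  ENNReal.ofReal_le_ofReal hintub
            _ = V * ENNReal.ofReal ((M - ‖x‖^2 - ε^2/8) * K) := by
                rw [ENNReal.ofReal_mul ENNReal.toReal_nonneg, ENNReal.ofReal_toReal hVt]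
      _ = ENNReal.ofReal ((M - ‖x‖^2 - ε^2/8) * K) := by
          rw [← mul_assoc, ENNReal.inv_mul_cancel hV0 hVt, one_mul]
    -- dirac part
    have hnv : ‖ε • σ x‖ = ε := by
      rw [norm_smul, hσ.2 x, Real.norm_eq_abs, abs_of_pos hε, mul_one]
    have hd1mem : x + ε • σ x ∈ Oeps Ω ε := by
      apply ball_subset_Oeps hx
      rw [dist_eq_norm, add_sub_cancel_left, hnv]
    have hd2mem : x - ε • σ x ∈ Oeps Ω ε := by
      apply ball_subset_Oeps hx
      rw [dist_eq_norm, sub_sub_cancel_left, norm_neg, hnv]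
    have hpar : ‖x + ε • σ x‖^2 + ‖x - ε • σ x‖^2 = 2*‖x‖^2 + 2*ε^2 := by
      have h1 := norm_add_sq_real x (ε • σ x)
      have h2 := norm_sub_sq_real x (ε • σ x)
      rw [hnv] at h1 h2
      linarith
    have hdsum : φ (x + ε • σ x) + φ (x - ε • σ x)
        = ENNReal.ofReal ((2*M - 2*‖x‖^2 - 2*ε^2) * K) := by
      rw [hφ]
      rw [← ENNReal.ofReal_add (hOM _ (hnormOeps _ hd1mem)) (hOM _ (hnormOeps _ hd2mem))]
      congr 1
      nlinarith [hpar]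
    -- combine
    calc 1 + (ENNReal.ofReal q * (V⁻¹ * ∫⁻ y in ball x ε, φ y)
          + ENNReal.ofReal ((1 - q)/2) * (φ (x + ε • σ x) + φ (x - ε • σ x)))
        ≤ 1 + (ENNReal.ofReal q * ENNReal.ofReal ((M - ‖x‖^2 - ε^2/8) * K)
          + ENNReal.ofReal ((1 - q)/2) * ENNReal.ofReal ((2*M - 2*‖x‖^2 - 2*ε^2) * K)) := by
          exact add_le_add_right (add_le_add (mul_le_mul_right hballpart _)
            (mul_le_mul_right (le_of_eq hdsum) _)) 1
    _ = ENNReal.ofReal (1 + (q * ((M - ‖x‖^2 - ε^2/8) * K)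
          + ((1 - q)/2) * ((2*M - 2*‖x‖^2 - 2*ε^2) * K))) := by
        have hε2 : ε^2 ≤ 1 := by nlinarith
        have nn1 : 0 ≤ q * ((M - ‖x‖^2 - ε^2/8) * K) := by
          apply mul_nonneg hq0.le
          apply mul_nonneg _ hKpos.le
          nlinarith
        have nn2 : 0 ≤ ((1 - q)/2) * ((2*M - 2*‖x‖^2 - 2*ε^2) * K) := by
          apply mul_nonneg (by linarith)
          apply mul_nonneg _ hKpos.le
          nlinarith
        rw [← ENNReal.ofReal_mul hq0.le, ← ENNReal.ofReal_mul (by linarith : (0:ℝ) ≤ (1-q)/2),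
          ← ENNReal.ofReal_add nn1 nn2, ← ENNReal.ofReal_one,
          ← ENNReal.ofReal_add (by norm_num) (by linarith)]
    _ ≤ φ x := by
        apply ENNReal.ofReal_le_ofReal
        have hexp : (M - ‖x‖^2) * K - (1 + (q * ((M - ‖x‖^2 - ε^2/8) * K)
            + ((1 - q)/2) * ((2*M - 2*‖x‖^2 - 2*ε^2) * K)))
            = (q/8) * (ε^2*K) + (1-q) * (ε^2*K) - 1 := by ring
        nlinarith [hKε, hq1, hq0.le, hexp]
  -- survival functions
  set h : ℕ → EucN N → ℝ≥0∞ := fun n x => cylProb γ n x (fun _ => Γᶜ) with hh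
  have hrec : ∀ n x, h (n+1) x = (Γᶜ).indicator 1 x * ∫⁻ y, h n y ∂(γ x) := fun n x => rfl
  have h0 : ∀ x, h 0 x = (Γᶜ).indicator 1 x := fun x => rfl
  have hzeroΓ : ∀ n x, x ∈ Γ → h n x = 0 := by
    intro n x hxΓ
    have hind : (Γᶜ).indicator (1 : EucN N → ℝ≥0∞) x = 0 :=
      indicator_of_notMem (by simpa using hxΓ) 1
    cases n with
    | zero => rw [h0, hind]
    | succ m => rw [hrec, hind, zero_mul]
  have hmeash : ∀ n, Measurable (h n) := by
    intro n; induction n with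
    | zero =>
      exact (measurable_one.indicator hΓmeas.compl :
          Measurable ((Γᶜ).indicator (1 : EucN N → ℝ≥0∞)))
    | succ m ih =>
      have hfun : h (m+1) = fun x => (Γᶜ).indicator 1 x * ∫⁻ y, h m y ∂(γ x) :=
        funext (hrec m)
      rw [hfun]
      exact (measurable_one.indicator hΓmeas.compl).mul
        (measurable_gamKer_lintegral q ε Ω hσ.1 ih)
  have hclosnotΓ : ∀ x ∈ closure Ω, x ∈ Γᶜ := fun x hx hxΓ => hxΓ.2 hx
  have hφ1 : ∀ x ∈ closure Ω, (1:ℝ≥0∞) ≤ φ x := by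
    intro x hx
    have hMx := hMclos x hx
    have hε2 : ε^2 ≤ 1 := by nlinarith
    have hK8 : (8:ℝ) ≤ K := by
      nlinarith [mul_nonneg (by linarith : (0:ℝ) ≤ 1 - ε^2) hKpos.le, hKε]
    exact ENNReal.one_le_ofReal.2 (by nlinarith)
  -- the main induction
  have hind : ∀ n, ∀ x ∈ Oeps Ω ε, ∑ k ∈ Finset.range (n+1), h k x ≤ φ x := by
    intro n
    induction n with
    | zero =>
      intro x hxO
      rw [Finset.sum_range_one]
      by_cases hxΓ : x ∈ Γ
      · rw [hzeroΓ 0 x hxΓ]; exact zero_le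
      · have hxc : x ∈ closure Ω := by by_contra hc; exact hxΓ ⟨hxO, hc⟩
        have h0x : h 0 x = 1 := by
          rw [h0]; exact indicator_of_mem (hclosnotΓ x hxc) 1
        rw [h0x]; exact hφ1 x hxc
    | succ m ih =>
      intro x hxO
      by_cases hxΓ : x ∈ Γ
      · rw [Finset.sum_eq_zero (fun k _ => hzeroΓ k x hxΓ)]; exact zero_le
      · have hxc : x ∈ closure Ω := by by_contra hc; exact hxΓ ⟨hxO, hc⟩
        have hind1 : (Γᶜ).indicator (1 : EucN N → ℝ≥0∞) x = 1 :=
          indicator_of_mem (hclosnotΓ x hxc) 1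
        have h0x : h 0 x = 1 := by rw [h0, hind1]
        have hsum : ∑ k ∈ Finset.range (m+1), h (k+1) x
            = ∫⁻ y, (∑ k ∈ Finset.range (m+1), h k y) ∂(γ x) := by
          rw [lintegral_finset_sum _ (fun k _ => hmeash k)]
          refine Finset.sum_congr rfl fun k _ => ?_
          rw [hrec, hind1, one_mul]
        have hae : ∀ᵐ y ∂(γ x), y ∈ Oeps Ω ε := by
          rw [ae_iff]
          exact gamKer_compl_Oeps hε hσ.2 hxc (q := q) (σ := σ)
        have hmono : ∫⁻ y, (∑ k ∈ Finset.range (m+1), h k y) ∂(γ x)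
            ≤ ∫⁻ y, φ y ∂(γ x) := by
          have heq : (fun y => ∑ k ∈ Finset.range (m+1), h k y)
              =ᵐ[γ x] fun y =>
                (Oeps Ω ε).indicator (fun y => ∑ k ∈ Finset.range (m+1), h k y) y := by
            filter_upwards [hae] with y hy
            rw [indicator_of_mem hy]
          rw [lintegral_congr_ae heq]
          apply lintegral_mono
          intro y
          by_cases hyO : y ∈ Oeps Ω ε
          · rw [indicator_of_mem hyO]; exact ih y hyO
          · rw [indicator_of_notMem hyO]; exact zero_le
        calc ∑ k ∈ Finset.range (m+1+1), h k x
            = (∑ k ∈ Finset.range (m+1), h (k+1) x) + h 0 x :=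
              Finset.sum_range_succ' _ _
        _ = ∫⁻ y, (∑ k ∈ Finset.range (m+1), h k y) ∂(γ x) + 1 := by rw [hsum, h0x]
        _ ≤ ∫⁻ y, φ y ∂(γ x) + 1 := add_le_add_left hmono 1
        _ = 1 + ∫⁻ y, φ y ∂(γ x) := add_comm _ _
        _ ≤ φ x := hdrift x hxc
  -- assemble
  have hsetmeas : ∀ n : ℕ, MeasurableSet {ω : ℕ → EucN N | (n:ℝ≥0∞) + 1 ≤ exitTimeE Γ ω} :=
    fun n => measurableSet_le measurable_const hτmeas
  have hPsurv : ∀ n : ℕ, P {ω | (n:ℝ≥0∞) + 1 ≤ exitTimeE Γ ω} = h n x₀ := by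
    intro n
    have hseteq : {ω : ℕ → EucN N | (n:ℝ≥0∞) + 1 ≤ exitTimeE Γ ω}
        = {ω : ℕ → EucN N | ∀ i ≤ n, ω i ∈ (fun _ : ℕ => Γᶜ) i} := by
      ext ω; exact exitTimeE_ge_iff n ω
    rw [hseteq, hP.2 n (fun _ => Γᶜ) (fun _ => hΓmeas.compl)]
  have hlint : ∫⁻ ω, exitTimeE Γ ω ∂P = ∑' n : ℕ, h n x₀ := by
    have hpt : ∀ ω : ℕ → EucN N, exitTimeE Γ ω
        = ∑' n : ℕ, {ω' : ℕ → EucN N | (n:ℝ≥0∞) + 1 ≤ exitTimeE Γ ω'}.indicator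
            (1 : (ℕ → EucN N) → ℝ≥0∞) ω := by
      intro ω
      rw [exitTimeE_tsum ω]
      refine tsum_congr fun n => ?_
      by_cases hcond : (n:ℝ≥0∞) + 1 ≤ exitTimeE Γ ω
      · rw [if_pos hcond]
        exact (indicator_of_mem
          (show ω ∈ {ω' : ℕ → EucN N | (n:ℝ≥0∞) + 1 ≤ exitTimeE Γ ω'} from hcond) 1).symm
      · rw [if_neg hcond]
        exact (indicator_of_notMem
          (show ω ∉ {ω' : ℕ → EucN N | (n:ℝ≥0∞) + 1 ≤ exitTimeE Γ ω'} from hcond) 1).symm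
    calc ∫⁻ ω, exitTimeE Γ ω ∂P
        = ∫⁻ ω, ∑' n : ℕ, {ω' : ℕ → EucN N | (n:ℝ≥0∞) + 1 ≤ exitTimeE Γ ω'}.indicator
            (1 : (ℕ → EucN N) → ℝ≥0∞) ω ∂P := lintegral_congr hpt
    _ = ∑' n : ℕ, ∫⁻ ω, {ω' : ℕ → EucN N | (n:ℝ≥0∞) + 1 ≤ exitTimeE Γ ω'}.indicator
            (1 : (ℕ → EucN N) → ℝ≥0∞) ω ∂P :=
        lintegral_tsum fun n => (measurable_one.indicator (hsetmeas n)).aemeasurable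
    _ = ∑' n : ℕ, P {ω | (n:ℝ≥0∞) + 1 ≤ exitTimeE Γ ω} :=
        tsum_congr fun n => lintegral_indicator_one (hsetmeas n)
    _ = ∑' n : ℕ, h n x₀ := tsum_congr hPsurv
  have htsum_le : ∑' n : ℕ, h n x₀ ≤ φ x₀ := by
    rw [ENNReal.tsum_eq_iSup_nat]
    apply iSup_le
    intro n
    cases n with
    | zero => simp
    | succ m => exact hind m x₀ hx₀
  have hφ_le : φ x₀ ≤ ENNReal.ofReal (M * K) := by
    apply ENNReal.ofReal_le_ofReal
    nlinarith [sq_nonneg ‖x₀‖, hKpos.le, norm_nonneg x₀]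
  constructor
  · calc ENNReal.ofReal (ε^2) * ∫⁻ ω, exitTimeE Γ ω ∂P
        ≤ ENNReal.ofReal (ε^2) * ENNReal.ofReal (M * K) := by
          apply mul_le_mul_right
          rw [hlint]; exact htsum_le.trans hφ_le
    _ = ENNReal.ofReal (ε^2 * (M * K)) := (ENNReal.ofReal_mul (by positivity)).symm
    _ ≤ ENNReal.ofReal (8*M) := by
        apply ENNReal.ofReal_le_ofReal
        have hMK : ε^2 * (M * K) = M * (ε^2 * K) := by ring
        rw [hMK, hKε]; linarith
  · have hfin : ∫⁻ ω, exitTimeE Γ ω ∂P ≠ ⊤ := by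
      rw [hlint]
      exact ((htsum_le.trans hφ_le).trans_lt ENNReal.ofReal_lt_top).ne
    have hae := ae_lt_top hτmeas hfin
    have hcompl : P {ω | exitTimeE Γ ω < ⊤}ᶜ = 0 := by
      have hce : {ω : ℕ → EucN N | exitTimeE Γ ω < ⊤}ᶜ
          = {ω : ℕ → EucN N | ¬ exitTimeE Γ ω < ⊤} := rfl
      rw [hce]; exact hae
    have hms : MeasurableSet {ω : ℕ → EucN N | exitTimeE Γ ω < ⊤} :=
      measurableSet_lt hτmeas measurable_const
    rwa [prob_compl_eq_zero_iff hms] at hcompl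

end
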